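/- The function log(f₁), where f₁(θ) = 1 - 2⌊a₁(θ)/2⌋θ, is Lebesgue integrable on (0,1): ∫₀¹ |log f₁(θ)| dθ < Σ_{k≥1} log(2k+1)/((2k+1)(2k+2)) + Σ_{n,m≥1} (log(2n+1)+log(m+1))/((2nm+1)(2n(m+1)+1)) < ∞. -/

import Mathlib

open MeasureTheory Set
open scoped ENNReal

/-- `f₁(θ) = 1 - 2⌊a₁(θ)/2⌋θ`, where `a₁(θ) = ⌊1/θ⌋`. -/
noncomputable def fOne (θ : ℝ) : ℝ := 1 - 2 * ((⌊1/θ⌋ / 2 : ℤ) : ℝ) * θ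


private def Jodd (k : ℕ) : Set ℝ := Set.Ioo (1/(2*(k:ℝ)+4)) (1/(2*(k:ℝ)+3))

private lemma abs_log_le {x c : ℝ} (hc : 1 ≤ c) (h1 : 1/c ≤ x) (h2 : x ≤ 1) :
    |Real.log x| ≤ Real.log c := by
  have hc0 : (0:ℝ) < c := lt_of_lt_of_le one_pos hc
  have hx0 : (0:ℝ) < x := lt_of_lt_of_le (by positivity) h1
  rw [abs_of_nonpos (Real.log_nonpos hx0.le h2)]
  have h3 : Real.log (1/c) ≤ Real.log x := (Real.log_le_log_iff (by positivity) hx0).mpr h1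
  rw [one_div, Real.log_inv] at h3
  linarith

private lemma fOne_odd {k : ℕ} {θ : ℝ} (h : θ ∈ Jodd k) : fOne θ = 1 - 2*((k:ℝ)+1)*θ := by
  obtain ⟨h1, h2⟩ := h
  have hk3 : (0:ℝ) < 2*(k:ℝ)+3 := by positivity
  have hk4 : (0:ℝ) < 2*(k:ℝ)+4 := by positivity
  have hθ : 0 < θ := lt_trans (by positivity) h1
  have ha : θ * (2*(k:ℝ)+3) < 1 := (lt_div_iff₀ hk3).mp h2
  have hb : 1 < θ * (2*(k:ℝ)+4) := (div_lt_iff₀ hk4).mp h1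
  have hfloor : ⌊1/θ⌋ = 2*(k:ℤ)+3 := by
    rw [Int.floor_eq_iff]
    constructor
    · push_cast
      rw [le_div_iff₀ hθ]; nlinarith
    · push_cast
      rw [div_lt_iff₀ hθ]; nlinarith
  unfold fOne
  rw [hfloor]
  have : (2*(k:ℤ)+3)/2 = (k:ℤ)+1 := by omega
  rw [this]
  push_cast
  ring

private lemma bound_odd {k : ℕ} {θ : ℝ} (h : θ ∈ Jodd k) :
    |Real.log (fOne θ)| ≤ Real.log (2*((k:ℝ)+1)+1) := by
  rw [fOne_odd h]
  obtain ⟨h1, h2⟩ := h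
  have hk3 : (0:ℝ) < 2*(k:ℝ)+3 := by positivity
  have hθ : 0 < θ := lt_trans (by positivity) h1
  have ha : θ * (2*(k:ℝ)+3) < 1 := (lt_div_iff₀ hk3).mp h2
  apply abs_log_le
  · have : (0:ℝ) ≤ (k:ℝ) := Nat.cast_nonneg k
    linarith
  · rw [div_le_iff₀ (by positivity)]
    nlinarith
  · nlinarith

private lemma fOne_mid {θ : ℝ} (h : θ ∈ Set.Ioo (1/2 : ℝ) 1) : fOne θ = 1 := by
  obtain ⟨h1, h2⟩ := h
  have hθ : 0 < θ := lt_trans (by norm_num) h1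
  have hfloor : ⌊1/θ⌋ = 1 := by
    rw [Int.floor_eq_iff]
    constructor
    · push_cast; rw [le_div_iff₀ hθ]; linarith
    · push_cast; rw [div_lt_iff₀ hθ]; linarith
  unfold fOne
  rw [hfloor]
  norm_num

private def Jeven (p : ℕ × ℕ) : Set ℝ :=
  Set.Ioo (((p.2:ℝ)+1)/(2*((p.1:ℝ)+1)*((p.2:ℝ)+1)+1))
    (((p.2:ℝ)+2)/(2*((p.1:ℝ)+1)*((p.2:ℝ)+2)+1))

private lemma measurable_fOne : Measurable fOne := by
  unfold fOne
  have h1 : Measurable fun θ : ℝ => 1/θ := measurable_const.div measurable_id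
  have h2 : Measurable fun θ : ℝ => ((⌊1/θ⌋ / 2 : ℤ) : ℝ) :=
    (measurable_from_top (f := fun n : ℤ => ((n/2 : ℤ) : ℝ))).comp h1.floor
  exact measurable_const.sub ((measurable_const.mul h2).mul measurable_id)

private lemma bound_even {p : ℕ × ℕ} {θ : ℝ} (h : θ ∈ Jeven p) :
    |Real.log (fOne θ)| ≤ Real.log (2*((p.1:ℝ)+1)+1) + Real.log ((p.2:ℝ)+2) := by
  obtain ⟨h1, h2⟩ := h
  set N : ℝ := (p.1:ℝ)+1 with hNdef
  set M : ℝ := (p.2:ℝ)+1 with hMdef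
  have hN : 1 ≤ N := by simp [hNdef]
  have hM : 1 ≤ M := by simp [hMdef]
  have hD1 : (0:ℝ) < 2*N*M+1 := by nlinarith
  have hD2 : (0:ℝ) < 2*N*(M+1)+1 := by nlinarith
  have h2' : θ * (2*N*(M+1)+1) < M+1 := by
    have := (lt_div_iff₀ hD2).mp (by convert h2 using 2 <;> ring)
    linarith
  have h1' : M < θ * (2*N*M+1) := by
    have := (div_lt_iff₀ hD1).mp (by convert h1 using 2 <;> ring)
    linarith
  have hθ : 0 < θ := by nlinarith
  have hfloor : ⌊1/θ⌋ = 2*((p.1:ℤ)+1) := by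
    rw [Int.floor_eq_iff]
    constructor
    · push_cast
      rw [le_div_iff₀ hθ]
      show 2*N*θ ≤ 1
      nlinarith
    · push_cast
      rw [div_lt_iff₀ hθ]
      show 1 < (2*N+1)*θ
      nlinarith
  have heq : fOne θ = 1 - 2*N*θ := by
    unfold fOne
    rw [hfloor]
    have : (2*((p.1:ℤ)+1))/2 = (p.1:ℤ)+1 := by omega
    rw [this, hNdef]
    push_cast
    ring
  rw [heq]
  have key : |Real.log (1 - 2*N*θ)| ≤ Real.log (2*N*(M+1)+1) := by
    apply abs_log_le
    · nlinarith
    · rw [div_le_iff₀ hD2]; nlinarith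
    · nlinarith
  refine key.trans ?_
  have hle : 2*N*(M+1)+1 ≤ (2*N+1)*(M+1) := by nlinarith
  have := (Real.log_le_log_iff (by nlinarith) (by nlinarith)).mpr hle
  refine this.trans (le_of_eq ?_)
  rw [Real.log_mul (by nlinarith) (by nlinarith)]
  norm_num [hMdef]
  ring_nf

private lemma inv_mem_Ioo {x c d : ℝ} (hc : 0 < c) (h1 : c < x) (h2 : x < d) :
    1/x ∈ Set.Ioo (1/d) (1/c) :=
  ⟨one_div_lt_one_div_of_lt (hc.trans h1) h2, one_div_lt_one_div_of_lt hc h1⟩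

private lemma cover {θ : ℝ} (h0 : 0 < θ) (h1 : θ < 1) (hirr : Irrational θ) :
    θ ∈ Set.Ioo (1/2 : ℝ) 1 ∨ (∃ k : ℕ, θ ∈ Jodd k) ∨ (∃ p : ℕ × ℕ, θ ∈ Jeven p) := by
  have hinv : Irrational (1/θ) := by rw [one_div]; exact (irrational_inv_iff).mpr hirr
  have hx1 : 1 < 1/θ := one_lt_one_div h0 h1
  set x := 1/θ with hxdef
  have hθx : θ = 1/x := by rw [hxdef, one_div_one_div]
  set a : ℤ := ⌊x⌋ with hadef
  have ha1 : 1 ≤ a := by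
    rw [hadef, Int.le_floor]; push_cast; linarith
  have hax : (a:ℝ) < x := lt_of_le_of_ne (Int.floor_le x) (Ne.symm (hinv.ne_int a))
  have hxa : x < (a:ℝ)+1 := by have := Int.lt_floor_add_one x; push_cast at this ⊢; linarith
  obtain ⟨A, hA⟩ : ∃ A : ℕ, a = (A:ℤ) := ⟨a.toNat, (Int.toNat_of_nonneg (by linarith)).symm⟩
  have hA1 : 1 ≤ A := by omega
  rcases Nat.even_or_odd A with ⟨N, hNe⟩ | ⟨k, hko⟩
  · -- even case : a = 2N with N ≥ 1
    obtain ⟨n, rfl⟩ : ∃ n, N = n+1 := ⟨N-1, by omega⟩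
    have hcast : (a:ℝ) = 2*((n:ℝ)+1) := by rw [hA, hNe]; push_cast; ring
    rw [hcast] at hax
    rw [hcast] at hxa
    set Nr : ℝ := (n:ℝ)+1 with hNr
    have hNr1 : (1:ℝ) ≤ Nr := by simp [hNr]
    set β : ℝ := x - 2*Nr with hβdef
    have hβ0 : 0 < β := by simp [hβdef]; linarith
    have hβ1 : β < 1 := by simp [hβdef]; linarith
    have hβirr : Irrational β := by
      have : β = x - ((2*((n:ℤ)+1) : ℤ):ℝ) := by push_cast [hβdef, hNr]; ring
      rw [this]; exact hinv.sub_intCast _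
    have hβinv : Irrational (1/β) := by rw [one_div]; exact (irrational_inv_iff).mpr hβirr
    have hy1 : 1 < 1/β := one_lt_one_div hβ0 hβ1
    set y := 1/β with hydef
    have hβy : β = 1/y := by rw [hydef, one_div_one_div]
    set b : ℤ := ⌊y⌋ with hbdef
    have hb1 : 1 ≤ b := by rw [hbdef, Int.le_floor]; push_cast; linarith
    have hby : (b:ℝ) < y := lt_of_le_of_ne (Int.floor_le y) (Ne.symm (hβinv.ne_int b))
    have hyb : y < (b:ℝ)+1 := by have := Int.lt_floor_add_one y; push_cast at this ⊢; linarith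
    obtain ⟨m, hm⟩ : ∃ m : ℕ, b = ((m:ℤ)+1) := ⟨(b-1).toNat, by omega⟩
    set Mr : ℝ := (m:ℝ)+1 with hMr
    have hMr1 : (1:ℝ) ≤ Mr := by simp [hMr]
    have hbcast : (b:ℝ) = Mr := by rw [hm]; push_cast [hMr]; ring
    rw [hbcast] at hby hyb
    have hβmem : β ∈ Set.Ioo (1/(Mr+1)) (1/Mr) := by
      rw [hβy]; exact inv_mem_Ioo (by linarith) hby hyb
    -- hence x ∈ (2Nr + 1/(Mr+1), 2Nr + 1/Mr)
    have hxlow : 2*Nr + 1/(Mr+1) < x := by have := hβmem.1; simp only [hβdef] at this; linarith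
    have hxhigh : x < 2*Nr + 1/Mr := by have := hβmem.2; simp only [hβdef] at this; linarith
    have hMr0 : (0:ℝ) < Mr := by linarith
    have hMr10 : (0:ℝ) < Mr+1 := by linarith
    have e1 : 2*Nr + 1/Mr = (2*Nr*Mr+1)/Mr := by field_simp
    have e2 : 2*Nr + 1/(Mr+1) = (2*Nr*(Mr+1)+1)/(Mr+1) := by field_simp
    have hθmem := inv_mem_Ioo (c := 2*Nr + 1/(Mr+1)) (by positivity) hxlow hxhigh
    rw [← hθx] at hθmem
    rw [e1, e2, one_div_div, one_div_div] at hθmem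
    right; right
    refine ⟨(n, m), ?_⟩
    have hre : ((m:ℝ)+1+1) = (m:ℝ)+2 := by ring
    simpa [Jeven, hNr, hMr, hre] using hθmem
  · -- odd case
    rcases eq_or_lt_of_le hA1 with h1A | h2A
    · -- A = 1
      left
      have hcast : (a:ℝ) = 1 := by rw [hA, ← h1A]; norm_num
      rw [hcast] at hax hxa
      have := inv_mem_Ioo (c := (1:ℝ)) (d := (2:ℝ)) one_pos hax (by linarith)
      rw [← hθx] at this
      simpa using this
    · -- A = 2j+3
      obtain ⟨j, hj⟩ : ∃ j : ℕ, A = 2*j+3 := ⟨k-1, by omega⟩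
      have hcast : (a:ℝ) = 2*(j:ℝ)+3 := by rw [hA, hj]; push_cast; ring
      rw [hcast] at hax hxa
      right; left
      refine ⟨j, ?_⟩
      have := inv_mem_Ioo (c := 2*(j:ℝ)+3) (d := 2*(j:ℝ)+4) (by positivity) hax (by linarith)
      rw [← hθx] at this
      simpa [Jodd] using this

private lemma log_le_two_rpow {x : ℝ} (hx : 1 ≤ x) : Real.log x ≤ 2 * x ^ (1/2:ℝ) := by
  have hx0 : (0:ℝ) < x := lt_of_lt_of_le one_pos hx
  have h1 : Real.log (x ^ (1/2:ℝ)) = (1/2) * Real.log x := Real.log_rpow hx0 _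
  have h2 : Real.log (x ^ (1/2:ℝ)) ≤ x ^ (1/2:ℝ) - 1 :=
    Real.log_le_sub_one_of_pos (Real.rpow_pos_of_pos hx0 _)
  nlinarith [Real.rpow_pos_of_pos hx0 (1/2:ℝ)]

private lemma rpow_half_mul {z : ℝ} (hz : 0 < z) : z ^ (1/2:ℝ) * z ^ (3/2:ℝ) = z^2 := by
  rw [← Real.rpow_add hz]
  norm_num

private lemma summable_aux : Summable (fun n : ℕ => 1/((n:ℝ)+1)^(3/2:ℝ)) := by
  have h := Real.summable_one_div_nat_rpow.mpr (by norm_num : (1:ℝ) < 3/2)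
  have h2 := (summable_nat_add_iff 1).mpr h
  refine h2.congr fun n => ?_
  push_cast
  ring_nf

private lemma sum1 : Summable (fun k : ℕ =>
    Real.log (2*((k:ℝ)+1)+1) / ((2*((k:ℝ)+1)+1) * (2*((k:ℝ)+1)+2))) := by
  refine Summable.of_nonneg_of_le (fun k => ?_) (fun k => ?_) (summable_aux.mul_left 2)
  · have h1 : (1:ℝ) ≤ 2*((k:ℝ)+1)+1 := by have : (0:ℝ) ≤ (k:ℝ) := Nat.cast_nonneg k; linarith
    exact div_nonneg (Real.log_nonneg h1) (by positivity)
  · set K : ℝ := (k:ℝ) with hK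
    have hK0 : 0 ≤ K := Nat.cast_nonneg k
    have hb : (1:ℝ) ≤ 2*(K+1)+1 := by linarith
    have hlog : Real.log (2*(K+1)+1) ≤ 2 * (2*(K+1)+1) ^ (1/2:ℝ) := log_le_two_rpow hb
    have hden : (0:ℝ) < (2*(K+1)+1) * (2*(K+1)+2) := by positivity
    have hKpos : (0:ℝ) < (K+1)^(3/2:ℝ) := Real.rpow_pos_of_pos (by linarith) _
    rw [div_le_iff₀ hden] at *
    rw [show (2:ℝ) * (1/(K+1)^(3/2:ℝ)) = 2/(K+1)^(3/2:ℝ) by ring, div_mul_eq_mul_div,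
      le_div_iff₀ hKpos]
    -- suffices: log(2K+3) * (K+1)^{3/2} ≤ 2 * ((2K+3)(2K+4))
    have hmono : (K+1)^(3/2:ℝ) ≤ (2*(K+1)+1)^(3/2:ℝ) :=
      Real.rpow_le_rpow (by linarith) (by linarith) (by norm_num)
    have hmerge : (2*(K+1)+1) ^ (1/2:ℝ) * (2*(K+1)+1) ^ (3/2:ℝ) = (2*(K+1)+1)^2 :=
      rpow_half_mul (by linarith)
    have hrp : (0:ℝ) ≤ (2*(K+1)+1) ^ (1/2:ℝ) := (Real.rpow_pos_of_pos (by linarith) _).le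
    calc Real.log (2*(K+1)+1) * (K+1)^(3/2:ℝ)
        ≤ (2 * (2*(K+1)+1) ^ (1/2:ℝ)) * (2*(K+1)+1)^(3/2:ℝ) := by
          apply mul_le_mul hlog hmono hKpos.le
          positivity
      _ = 2 * ((2*(K+1)+1)^2) := by rw [mul_assoc, hmerge]
      _ ≤ 2 * ((2*(K+1)+1) * (2*(K+1)+2)) := by nlinarith

private lemma sum2 : Summable (fun p : ℕ × ℕ =>
    (Real.log (2*((p.1:ℝ)+1)+1) + Real.log ((p.2:ℝ)+2)) /
      ((2*((p.1:ℝ)+1)*((p.2:ℝ)+1)+1) * (2*((p.1:ℝ)+1)*((p.2:ℝ)+2)+1))) := by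
  have hsum : Summable (fun q : ℕ × ℕ =>
      (2/((q.1:ℝ)+1)^(3/2:ℝ)) * (1/((q.2:ℝ)+1)^(3/2:ℝ))) := by
    have := Summable.mul_of_nonneg (summable_aux.mul_left 2) summable_aux
      (f := fun n : ℕ => 2 * (1/((n:ℝ)+1)^(3/2:ℝ))) (g := fun n : ℕ => 1/((n:ℝ)+1)^(3/2:ℝ))
      ?_ ?_
    · exact this.congr fun q => by ring
    · intro n
      simp only [Pi.zero_apply]
      positivity
    · intro n
      simp only [Pi.zero_apply]
      positivity
  refine Summable.of_nonneg_of_le (fun p => ?_) (fun p => ?_) hsum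
  · have hN0 : (0:ℝ) ≤ (p.1:ℝ) := Nat.cast_nonneg _
    have hM0 : (0:ℝ) ≤ (p.2:ℝ) := Nat.cast_nonneg _
    apply div_nonneg _ (by positivity)
    exact add_nonneg (Real.log_nonneg (by linarith)) (Real.log_nonneg (by linarith))
  · set N : ℝ := (p.1:ℝ)+1 with hNdef
    set M : ℝ := (p.2:ℝ)+1 with hMdef
    have hN : (1:ℝ) ≤ N := by simp [hNdef]
    have hM : (1:ℝ) ≤ M := by simp [hMdef]
    have hN0 : (0:ℝ) < N := by linarith
    have hM0 : (0:ℝ) < M := by linarith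
    have hMe : (p.2:ℝ)+2 = M+1 := by rw [hMdef]; ring
    rw [hMe]
    -- numerator bound
    have hnum : Real.log (2*N+1) + Real.log (M+1) ≤ 6 * (N^(1/2:ℝ) * M^(1/2:ℝ)) := by
      have e1 : Real.log (2*N+1) + Real.log (M+1) = Real.log ((2*N+1)*(M+1)) :=
        (Real.log_mul (by linarith) (by linarith)).symm
      rw [e1]
      have h2 : Real.log ((2*N+1)*(M+1)) ≤ 2 * ((2*N+1)*(M+1)) ^ (1/2:ℝ) :=
        log_le_two_rpow (by nlinarith)
      have h3 : ((2*N+1)*(M+1)) ^ (1/2:ℝ) ≤ (9*(N*M)) ^ (1/2:ℝ) :=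
        Real.rpow_le_rpow (by nlinarith) (by nlinarith) (by norm_num)
      have h4 : (9*(N*M)) ^ (1/2:ℝ) = 3 * (N^(1/2:ℝ) * M^(1/2:ℝ)) := by
        rw [Real.mul_rpow (by norm_num) (by positivity), Real.mul_rpow hN0.le hM0.le]
        have : (9:ℝ)^(1/2:ℝ) = 3 := by
          rw [show (9:ℝ) = 3^(2:ℕ) by norm_num, ← Real.rpow_natCast 3 2,
            ← Real.rpow_mul (by norm_num)]
          norm_num
        rw [this]
      rw [h4] at h3
      linarith
    -- denominator bound
    have hden : 4*(N^2*M^2) ≤ (2*N*M+1) * (2*N*(M+1)+1) := by nlinarith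
    have hdpos : (0:ℝ) < (2*N*M+1) * (2*N*(M+1)+1) := by nlinarith
    have hrN := Real.rpow_pos_of_pos hN0 (3/2:ℝ)
    have hrM := Real.rpow_pos_of_pos hM0 (3/2:ℝ)
    have step1 : (Real.log (2*N+1) + Real.log (M+1)) / ((2*N*M+1) * (2*N*(M+1)+1))
        ≤ (6 * (N^(1/2:ℝ) * M^(1/2:ℝ))) / (4*(N^2*M^2)) := by
      apply div_le_div₀ (by positivity) hnum (by positivity) hden
    refine step1.trans ?_
    rw [show (2/N^(3/2:ℝ)) * (1/M^(3/2:ℝ)) = 2/(N^(3/2:ℝ)*M^(3/2:ℝ)) by ring,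
      div_le_div_iff₀ (by positivity) (by positivity)]
    have e5 : 6 * (N^(1/2:ℝ) * M^(1/2:ℝ)) * (N^(3/2:ℝ)*M^(3/2:ℝ))
        = 6 * ((N^(1/2:ℝ) * N^(3/2:ℝ)) * (M^(1/2:ℝ)*M^(3/2:ℝ))) := by ring
    rw [e5, rpow_half_mul hN0, rpow_half_mul hM0]
    nlinarith

private lemma meas_Jodd (k : ℕ) : MeasurableSet (Jodd k) := measurableSet_Ioo

private lemma meas_Jeven (p : ℕ × ℕ) : MeasurableSet (Jeven p) := measurableSet_Ioo

private lemma vol_Jodd (k : ℕ) : volume (Jodd k) =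
    ENNReal.ofReal (1/((2*((k:ℝ)+1)+1) * (2*((k:ℝ)+1)+2))) := by
  rw [Jodd, Real.volume_Ioo]
  congr 1
  have h3 : (0:ℝ) < 2*(k:ℝ)+3 := by positivity
  have h4 : (0:ℝ) < 2*(k:ℝ)+4 := by positivity
  field_simp
  ring

private lemma vol_Jeven (p : ℕ × ℕ) : volume (Jeven p) =
    ENNReal.ofReal (1/((2*((p.1:ℝ)+1)*((p.2:ℝ)+1)+1) * (2*((p.1:ℝ)+1)*((p.2:ℝ)+2)+1))) := by
  rw [Jeven, Real.volume_Ioo]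
  congr 1
  have hN0 : (0:ℝ) ≤ (p.1:ℝ) := Nat.cast_nonneg _
  have hM0 : (0:ℝ) ≤ (p.2:ℝ) := Nat.cast_nonneg _
  have h1 : (0:ℝ) < 2*((p.1:ℝ)+1)*((p.2:ℝ)+1)+1 := by nlinarith
  have h2 : (0:ℝ) < 2*((p.1:ℝ)+1)*((p.2:ℝ)+2)+1 := by nlinarith
  field_simp
  ring

/-- `log f₁` is Lebesgue integrable on `(0,1)`, with
`∫ |log f₁| < Σ_k log(2k+1)/((2k+1)(2k+2)) + Σ_{n,m} (log(2n+1)+log(m+1))/((2nm+1)(2n(m+1)+1))`,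
both series being (finite) convergent series of nonnegative terms. -/
theorem stmt15 :
    IntegrableOn (fun θ => |Real.log (fOne θ)|) (Set.Ioo (0:ℝ) 1) ∧
      (Summable fun k : ℕ =>
        Real.log (2*((k:ℝ)+1)+1) / ((2*((k:ℝ)+1)+1) * (2*((k:ℝ)+1)+2))) ∧
      (Summable fun p : ℕ × ℕ =>
        (Real.log (2*((p.1:ℝ)+1)+1) + Real.log ((p.2:ℝ)+2)) /
          ((2*((p.1:ℝ)+1)*((p.2:ℝ)+1)+1) * (2*((p.1:ℝ)+1)*((p.2:ℝ)+2)+1))) ∧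
      (∫ θ in Set.Ioo (0:ℝ) 1, |Real.log (fOne θ)|) <
        (∑' k : ℕ, Real.log (2*((k:ℝ)+1)+1) / ((2*((k:ℝ)+1)+1) * (2*((k:ℝ)+1)+2))) +
          ∑' p : ℕ × ℕ,
            (Real.log (2*((p.1:ℝ)+1)+1) + Real.log ((p.2:ℝ)+2)) /
              ((2*((p.1:ℝ)+1)*((p.2:ℝ)+1)+1) * (2*((p.1:ℝ)+1)*((p.2:ℝ)+2)+1)) := by
  have hfmeas : Measurable fun θ : ℝ => |Real.log (fOne θ)| :=
    (Real.measurable_log.comp measurable_fOne).abs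
  set f : ℝ → ℝ := fun θ => |Real.log (fOne θ)| with hfdef
  set T₁ : ℕ → ℝ := fun k =>
    Real.log (2*((k:ℝ)+1)+1) / ((2*((k:ℝ)+1)+1) * (2*((k:ℝ)+1)+2)) with hT1def
  set T₂ : ℕ × ℕ → ℝ := fun p =>
    (Real.log (2*((p.1:ℝ)+1)+1) + Real.log ((p.2:ℝ)+2)) /
      ((2*((p.1:ℝ)+1)*((p.2:ℝ)+1)+1) * (2*((p.1:ℝ)+1)*((p.2:ℝ)+2)+1)) with hT2def
  have hT1nonneg : ∀ k, 0 ≤ T₁ k := by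
    intro k
    have : (0:ℝ) ≤ (k:ℝ) := Nat.cast_nonneg k
    exact div_nonneg (Real.log_nonneg (by linarith)) (by positivity)
  have hT2nonneg : ∀ p, 0 ≤ T₂ p := by
    intro p
    have h1 : (0:ℝ) ≤ (p.1:ℝ) := Nat.cast_nonneg _
    have h2 : (0:ℝ) ≤ (p.2:ℝ) := Nat.cast_nonneg _
    refine div_nonneg (add_nonneg (Real.log_nonneg (by linarith)) (Real.log_nonneg (by linarith)))
      (by positivity)
  have hsum1 := sum1
  have hsum2 := sum2
  rw [← hT1def] at hsum1
  rw [← hT2def] at hsum2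
  have hsum1' : Summable (fun k => T₁ (k+1)) := (summable_nat_add_iff 1).mpr hsum1
  set L : ℝ≥0∞ := ∫⁻ θ in Set.Ioo (0:ℝ) 1, ENNReal.ofReal (f θ) with hLdef
  set c₁ : ℕ → ℝ := fun k => Real.log (2*((k:ℝ)+1)+1) with hc1def
  set c₂ : ℕ × ℕ → ℝ := fun p => Real.log (2*((p.1:ℝ)+1)+1) + Real.log ((p.2:ℝ)+2) with hc2def
  have hc1nonneg : ∀ k, 0 ≤ c₁ k := fun k => by
    have : (0:ℝ) ≤ (k:ℝ) := Nat.cast_nonneg k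
    exact Real.log_nonneg (by simp [hc1def]; linarith)
  have hc2nonneg : ∀ p, 0 ≤ c₂ p := fun p => by
    have h1 : (0:ℝ) ≤ (p.1:ℝ) := Nat.cast_nonneg _
    have h2 : (0:ℝ) ≤ (p.2:ℝ) := Nat.cast_nonneg _
    exact add_nonneg (Real.log_nonneg (by linarith)) (Real.log_nonneg (by linarith))
  -- the key bound
  set R : ℝ := ((∑' k, T₁ (k+1)) + (∑' p, T₂ p))
      + (Real.log (12/5) * (1/24) + Real.log 3 * (1/24)) with hRdef
  have hR0 : 0 ≤ R := by
    have : 0 ≤ ∑' k, T₁ (k+1) := tsum_nonneg fun k => hT1nonneg (k+1)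
    have : 0 ≤ ∑' p, T₂ p := tsum_nonneg hT2nonneg
    have := Real.log_nonneg (show (1:ℝ) ≤ 12/5 by norm_num)
    have := Real.log_nonneg (show (1:ℝ) ≤ 3 by norm_num)
    rw [hRdef]; positivity
  have hJ0eq : Jodd 0 = Set.Ioo (1/4 : ℝ) (1/3) := by
    rw [Jodd]; norm_num
  set s : Set ℝ := Set.Ioo (0:ℝ) 1 \ Jodd 0 with hsdef
  have hs_meas : MeasurableSet s := measurableSet_Ioo.diff (meas_Jodd 0)
  have hJ0sub : Jodd 0 ⊆ Set.Ioo (0:ℝ) 1 := by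
    rw [hJ0eq]; exact Set.Ioo_subset_Ioo (by norm_num) (by norm_num)
  have hcup : Set.Ioo (0:ℝ) 1 = s ∪ Jodd 0 := (Set.diff_union_of_subset hJ0sub).symm
  set g₁ : ℝ → ℝ≥0∞ :=
    fun θ => ∑' k : ℕ, (Jodd (k+1)).indicator (fun _ => ENNReal.ofReal (c₁ (k+1))) θ with hg1def
  set g₂ : ℝ → ℝ≥0∞ :=
    fun θ => ∑' p : ℕ × ℕ, (Jeven p).indicator (fun _ => ENNReal.ofReal (c₂ p)) θ with hg2def
  have hm1 : ∀ k : ℕ, Measurable ((Jodd (k+1)).indicator (fun _ => ENNReal.ofReal (c₁ (k+1)))) :=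
    fun k => measurable_const.indicator (meas_Jodd _)
  have hm2 : ∀ p : ℕ × ℕ, Measurable ((Jeven p).indicator (fun _ => ENNReal.ofReal (c₂ p))) :=
    fun p => measurable_const.indicator (meas_Jeven _)
  have hg1meas : Measurable g₁ := Measurable.ennreal_tsum hm1
  have hg2meas : Measurable g₂ := Measurable.ennreal_tsum hm2
  have hpt : ∀ θ ∈ s, Irrational θ → ENNReal.ofReal (f θ) ≤ g₁ θ + g₂ θ := by
    intro θ hθ hirr
    obtain hmid | ⟨k, hk⟩ | ⟨p, hp⟩ := cover hθ.1.1 hθ.1.2 hirr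
    · have hz : f θ = 0 := by simp only [hfdef]; rw [fOne_mid hmid]; simp
      simp [hz]
    · rcases k with _ | j
      · exact absurd hk hθ.2
      · calc ENNReal.ofReal (f θ) ≤ ENNReal.ofReal (c₁ (j+1)) :=
              ENNReal.ofReal_le_ofReal (bound_odd hk)
          _ = (Jodd (j+1)).indicator (fun _ => ENNReal.ofReal (c₁ (j+1))) θ :=
              (Set.indicator_of_mem hk fun _ => ENNReal.ofReal (c₁ (j+1))).symm
          _ ≤ g₁ θ := ENNReal.le_tsum j
          _ ≤ g₁ θ + g₂ θ := le_self_add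
    · calc ENNReal.ofReal (f θ) ≤ ENNReal.ofReal (c₂ p) :=
            ENNReal.ofReal_le_ofReal (bound_even hp)
        _ = (Jeven p).indicator (fun _ => ENNReal.ofReal (c₂ p)) θ :=
            (Set.indicator_of_mem hp fun _ => ENNReal.ofReal (c₂ p)).symm
        _ ≤ g₂ θ := ENNReal.le_tsum p
        _ ≤ g₁ θ + g₂ θ := le_add_self
  have hirr_ae : ∀ᵐ θ : ℝ, Irrational θ := by
    rw [ae_iff]
    have he : {θ : ℝ | ¬Irrational θ} = Set.range ((↑) : ℚ → ℝ) := by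
      ext θ; simp [Irrational]
    rw [he]
    exact (Set.countable_range _).measure_zero _
  have hL : L ≤ ENNReal.ofReal R := by
    have hLsplit : L = (∫⁻ θ in s, ENNReal.ofReal (f θ))
        + ∫⁻ θ in Jodd 0, ENNReal.ofReal (f θ) := by
      rw [hLdef, hcup, lintegral_union (meas_Jodd 0) disjoint_sdiff_self_left]
    have hInt_s : (∫⁻ θ in s, ENNReal.ofReal (f θ)) ≤ ∫⁻ θ, (g₁ θ + g₂ θ) := by
      refine le_trans (lintegral_mono_ae ?_) (setLIntegral_le_lintegral _ _)
      rw [ae_restrict_iff' hs_meas]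
      exact hirr_ae.mono fun θ hirr hmem => hpt θ hmem hirr
    have hGcalc : (∫⁻ θ, (g₁ θ + g₂ θ))
        = (∑' k : ℕ, ENNReal.ofReal (c₁ (k+1)) * volume (Jodd (k+1)))
          + ∑' p : ℕ × ℕ, ENNReal.ofReal (c₂ p) * volume (Jeven p) := by
      rw [lintegral_add_left hg1meas]
      congr 1
      · rw [hg1def, lintegral_tsum fun k => (hm1 k).aemeasurable]
        exact tsum_congr fun k => lintegral_indicator_const (meas_Jodd _) _
      · rw [hg2def, lintegral_tsum fun p => (hm2 p).aemeasurable]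
        exact tsum_congr fun p => lintegral_indicator_const (meas_Jeven _) _
    have hof1 : (∑' k : ℕ, ENNReal.ofReal (c₁ (k+1)) * volume (Jodd (k+1)))
        = ENNReal.ofReal (∑' k, T₁ (k+1)) := by
      rw [ENNReal.ofReal_tsum_of_nonneg (fun k => hT1nonneg (k+1)) hsum1']
      refine tsum_congr fun k => ?_
      rw [vol_Jodd, ← ENNReal.ofReal_mul (hc1nonneg (k+1))]
      congr 1
      simp only [hT1def, hc1def, mul_one_div]
    have hof2 : (∑' p : ℕ × ℕ, ENNReal.ofReal (c₂ p) * volume (Jeven p))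
        = ENNReal.ofReal (∑' p, T₂ p) := by
      rw [ENNReal.ofReal_tsum_of_nonneg hT2nonneg hsum2]
      refine tsum_congr fun p => ?_
      rw [vol_Jeven, ← ENNReal.ofReal_mul (hc2nonneg p)]
      congr 1
      simp only [hT2def, hc2def, mul_one_div]
    have hJ0bound : (∫⁻ θ in Jodd 0, ENNReal.ofReal (f θ)) ≤
        ENNReal.ofReal (Real.log (12/5) * (1/24)) + ENNReal.ofReal (Real.log 3 * (1/24)) := by
      have hsplit : Jodd 0 = Set.Ioc (1/4:ℝ) (7/24) ∪ Set.Ioo (7/24:ℝ) (1/3) := by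
        rw [hJ0eq,
          Set.Ioc_union_Ioo_eq_Ioo (show (1/4:ℝ) ≤ 7/24 by norm_num)
            (show (7/24:ℝ) < 1/3 by norm_num)]
      have hdisj : Disjoint (Set.Ioc (1/4:ℝ) (7/24)) (Set.Ioo (7/24:ℝ) (1/3)) :=
        Set.disjoint_left.mpr fun x hx hx' => absurd hx.2 (not_le.mpr hx'.1)
      rw [hsplit, lintegral_union measurableSet_Ioo hdisj]
      refine add_le_add ?_ ?_
      · have hb : ∀ θ ∈ Set.Ioc (1/4:ℝ) (7/24),
            ENNReal.ofReal (f θ) ≤ ENNReal.ofReal (Real.log (12/5)) := by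
          intro θ hθ
          refine ENNReal.ofReal_le_ofReal ?_
          have hmem : θ ∈ Jodd 0 := by
            rw [hJ0eq]; exact ⟨hθ.1, lt_of_le_of_lt hθ.2 (by norm_num)⟩
          show |Real.log (fOne θ)| ≤ _
          have heq : fOne θ = 1 - 2*θ := by rw [fOne_odd hmem]; norm_num
          rw [heq]
          have h1 := hθ.1
          have h2 := hθ.2
          apply abs_log_le (by norm_num) (by norm_num; linarith) (by linarith)
        calc (∫⁻ θ in Set.Ioc (1/4:ℝ) (7/24), ENNReal.ofReal (f θ))
            ≤ ∫⁻ _ in Set.Ioc (1/4:ℝ) (7/24), ENNReal.ofReal (Real.log (12/5)) :=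
              setLIntegral_mono' measurableSet_Ioc hb
          _ = ENNReal.ofReal (Real.log (12/5)) * volume (Set.Ioc (1/4:ℝ) (7/24)) :=
              setLIntegral_const _ _
          _ = ENNReal.ofReal (Real.log (12/5) * (1/24)) := by
              rw [Real.volume_Ioc, ← ENNReal.ofReal_mul (Real.log_nonneg (by norm_num))]
              norm_num
      · have hb : ∀ θ ∈ Set.Ioo (7/24:ℝ) (1/3),
            ENNReal.ofReal (f θ) ≤ ENNReal.ofReal (Real.log 3) := by
          intro θ hθ
          refine ENNReal.ofReal_le_ofReal ?_
          have hmem : θ ∈ Jodd 0 := by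
            rw [hJ0eq]; exact ⟨lt_trans (by norm_num) hθ.1, hθ.2⟩
          show |Real.log (fOne θ)| ≤ _
          have heq : fOne θ = 1 - 2*θ := by rw [fOne_odd hmem]; norm_num
          rw [heq]
          have h1 := hθ.1
          have h2 := hθ.2
          apply abs_log_le (by norm_num) (by norm_num; linarith) (by linarith)
        calc (∫⁻ θ in Set.Ioo (7/24:ℝ) (1/3), ENNReal.ofReal (f θ))
            ≤ ∫⁻ _ in Set.Ioo (7/24:ℝ) (1/3), ENNReal.ofReal (Real.log 3) :=
              setLIntegral_mono' measurableSet_Ioo hb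
          _ = ENNReal.ofReal (Real.log 3) * volume (Set.Ioo (7/24:ℝ) (1/3)) :=
              setLIntegral_const _ _
          _ = ENNReal.ofReal (Real.log 3 * (1/24)) := by
              rw [Real.volume_Ioo, ← ENNReal.ofReal_mul (Real.log_nonneg (by norm_num))]
              norm_num
    have htsum1nn : 0 ≤ ∑' k, T₁ (k+1) := tsum_nonneg fun k => hT1nonneg (k+1)
    have htsum2nn : 0 ≤ ∑' p, T₂ p := tsum_nonneg hT2nonneg
    calc L ≤ ((∑' k : ℕ, ENNReal.ofReal (c₁ (k+1)) * volume (Jodd (k+1)))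
          + ∑' p : ℕ × ℕ, ENNReal.ofReal (c₂ p) * volume (Jeven p))
          + (ENNReal.ofReal (Real.log (12/5) * (1/24))
            + ENNReal.ofReal (Real.log 3 * (1/24))) := by
          rw [hLsplit, ← hGcalc]
          exact add_le_add hInt_s hJ0bound
      _ = ENNReal.ofReal R := by
          rw [hof1, hof2, ← ENNReal.ofReal_add htsum1nn htsum2nn,
            ← ENNReal.ofReal_add
              (mul_nonneg (Real.log_nonneg (by norm_num)) (by norm_num))
              (mul_nonneg (Real.log_nonneg (by norm_num)) (by norm_num)),
            ← ENNReal.ofReal_add (add_nonneg htsum1nn htsum2nn)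
              (add_nonneg (mul_nonneg (Real.log_nonneg (by norm_num)) (by norm_num))
                (mul_nonneg (Real.log_nonneg (by norm_num)) (by norm_num))), hRdef]
  constructor
  · refine ⟨hfmeas.aestronglyMeasurable, ?_⟩
    rw [hasFiniteIntegral_iff_ofReal (Filter.Eventually.of_forall fun θ => abs_nonneg _)]
    exact lt_of_le_of_lt hL ENNReal.ofReal_lt_top
  refine ⟨hsum1, hsum2, ?_⟩
  have hint : ∫ θ in Set.Ioo (0:ℝ) 1, f θ = L.toReal :=
    integral_eq_lintegral_of_nonneg_ae (Filter.Eventually.of_forall fun θ => abs_nonneg _)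
      hfmeas.aestronglyMeasurable
  rw [hint]
  refine lt_of_le_of_lt (ENNReal.toReal_le_of_le_ofReal hR0 hL) ?_
  have hS1 : (∑' k, T₁ k) = T₁ 0 + ∑' k, T₁ (k+1) := hsum1.tsum_eq_zero_add
  have hT10 : T₁ 0 = Real.log 3 / 12 := by rw [hT1def]; norm_num
  have hloglt : Real.log (12/5) < Real.log 3 := Real.log_lt_log (by norm_num) (by norm_num)
  rw [hRdef, hS1, hT10]
  linarith
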